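/- Let ν ≥ 0, α > -1, and let p_{n,m}^α denote the monic polynomial of degree n+m satisfying ∫₀^∞ p_{n,m}^α(x) x^(k+α) ρ_ν(x) dx = 0 for k < n and ∫₀^∞ p_{n,m}^α(x) x^(k+α) ρ_(ν+1)(x) dx = 0 for k < m (assumed to exist uniquely for the index pairs involved). Then (p_{n,n}^α)'(x) = 2n · p_{n,n-1}^(α+1)(x) for all n ≥ 1. -/

import Mathlib

open MeasureTheory Real Set

noncomputable def rho (ν x : ℝ) : ℝ :=
  ∫ t in Set.Ioi (0:ℝ), t ^ (ν - 1) * Real.exp (-t - x / t)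

noncomputable def K (ν z : ℝ) : ℝ :=
  (1/2) * (z/2) ^ ν * ∫ t in Set.Ioi (0:ℝ), Real.exp (-t - z^2 / (4*t)) * t ^ (-ν - 1)


/-- `p` is the monic type-2 multiple orthogonal polynomial of multi-index `(n,m)`
for the weights `x^α ρ_ν` and `x^α ρ_{ν+1}` on `(0,∞)`. -/
def IsType2MOP (ν α : ℝ) (n m : ℕ) (p : Polynomial ℝ) : Prop :=
  p.Monic ∧ p.natDegree = n + m ∧
  (∀ k : ℕ, k < n → ∫ x in Set.Ioi (0:ℝ), p.eval x * x ^ ((k : ℝ) + α) * rho ν x = 0) ∧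
  (∀ k : ℕ, k < m → ∫ x in Set.Ioi (0:ℝ), p.eval x * x ^ ((k : ℝ) + α) * rho (ν + 1) x = 0)


open Filter Topology

-- e^{-u} ≤ s^s * u^{-s} for u > 0, s > 0
lemma exp_neg_le (s u : ℝ) (hs : 0 < s) (hu : 0 < u) :
    Real.exp (-u) ≤ s ^ s * u ^ (-s) := by
  have h1 : u ≤ s * Real.exp (u / s) := by
    have h := mul_le_mul_of_nonneg_left (Real.add_one_le_exp (u / s)) hs.le
    rw [mul_add, mul_one, mul_comm s (u / s), div_mul_cancel₀ u hs.ne'] at h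
    linarith
  have h2 : u ^ s ≤ (s * Real.exp (u / s)) ^ s :=
    Real.rpow_le_rpow hu.le h1 hs.le
  have h3 : (s * Real.exp (u / s)) ^ s = s ^ s * Real.exp u := by
    rw [Real.mul_rpow hs.le (Real.exp_pos _).le, ← Real.exp_mul]
    field_simp
  rw [h3] at h2
  have hA := Real.rpow_pos_of_pos hu s
  rw [Real.exp_neg, Real.rpow_neg hu.le, ← div_eq_mul_inv, inv_eq_one_div,
    div_le_div_iff₀ (Real.exp_pos u) hA]
  linarith

-- integrability of the rho integrand in t
lemma integrand_integrable {a x : ℝ} (hx : 0 < x) (ha : -3 < a) :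
    IntegrableOn (fun t : ℝ => t ^ a * Real.exp (-t - x / t)) (Ioi 0) := by
  have hmaj : IntegrableOn (fun t : ℝ => (2:ℝ) ^ (2:ℝ) * x ^ (-(2:ℝ)) *
      (Real.exp (-t) * t ^ (a + 3 - 1))) (Ioi 0) :=
    ((Real.GammaIntegral_convergent (by linarith : (0:ℝ) < a + 3)).const_mul _)
  refine Integrable.mono' hmaj ?_ ?_
  · apply ContinuousOn.aestronglyMeasurable ?_ measurableSet_Ioi
    intro t ht
    exact ((continuousOn_id.rpow_const (fun t ht => Or.inl (ne_of_gt ht)) t ht).mul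
      (((continuousOn_id.neg).sub (continuousOn_const.div continuousOn_id
        (fun t ht => ne_of_gt ht))).rexp t ht))
  · filter_upwards [ae_restrict_mem measurableSet_Ioi] with t ht
    have ht : (0:ℝ) < t := ht
    have h1 : Real.exp (-t - x / t) = Real.exp (-t) * Real.exp (-(x / t)) := by
      rw [← Real.exp_add]; ring_nf
    have h2 : Real.exp (-(x / t)) ≤ 2 ^ (2:ℝ) * (x / t) ^ (-(2:ℝ)) :=
      exp_neg_le 2 (x / t) two_pos (div_pos hx ht)
    have h3 : (x / t) ^ (-(2:ℝ)) = x ^ (-(2:ℝ)) * t ^ (2:ℝ) := by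
      rw [Real.rpow_neg (by positivity), Real.div_rpow hx.le ht.le, Real.rpow_neg hx.le,
        inv_div, div_eq_mul_inv, mul_comm]
    have hnn : 0 ≤ t ^ a * Real.exp (-t - x / t) := by positivity
    rw [Real.norm_of_nonneg hnn, h1]
    have : t ^ a * (Real.exp (-t) * Real.exp (-(x / t))) ≤
        t ^ a * (Real.exp (-t) * (2 ^ (2:ℝ) * (x ^ (-(2:ℝ)) * t ^ (2:ℝ)))) := by
      rw [h3] at h2
      have := Real.rpow_pos_of_pos ht a
      nlinarith [Real.exp_pos (-t), Real.rpow_nonneg ht.le a,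
        mul_le_mul_of_nonneg_left h2 (Real.exp_pos (-t)).le]
    calc t ^ a * (Real.exp (-t) * Real.exp (-(x / t))) ≤ _ := this
      _ = 2 ^ (2:ℝ) * x ^ (-(2:ℝ)) * (Real.exp (-t) * t ^ (a + 3 - 1)) := by
          rw [show a + 3 - 1 = a + 2 by ring, Real.rpow_add ht a 2]; ring

lemma rho_nonneg (ν x : ℝ) : 0 ≤ rho ν x := by
  apply setIntegral_nonneg measurableSet_Ioi
  intro t ht
  have : (0:ℝ) < t := ht
  positivity

noncomputable def rhoC (μ s : ℝ) : ℝ := s ^ s * ∫ t in Ioi (0:ℝ), Real.exp (-t) * t ^ (μ + s - 1)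

lemma rhoC_nonneg (μ s : ℝ) (hs : 0 < s) : 0 ≤ rhoC μ s := by
  have : 0 ≤ ∫ t in Ioi (0:ℝ), Real.exp (-t) * t ^ (μ + s - 1) := by
    apply setIntegral_nonneg measurableSet_Ioi
    intro t ht
    have : (0:ℝ) < t := ht
    positivity
  have := Real.rpow_nonneg hs.le s
  exact mul_nonneg (Real.rpow_nonneg hs.le s) ‹_›

/-- master bound: rho μ x ≤ C(μ,s) x^{-s}. -/
lemma rho_le (μ s x : ℝ) (hμ : 0 ≤ μ) (hs : 0 < s) (hx : 0 < x) :
    rho μ x ≤ rhoC μ s * x ^ (-s) := by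
  have hint : IntegrableOn (fun t : ℝ => t ^ (μ - 1) * Real.exp (-t - x / t)) (Ioi 0) :=
    integrand_integrable hx (by linarith)
  have hmaj : IntegrableOn (fun t : ℝ => s ^ s * x ^ (-s) * (Real.exp (-t) * t ^ (μ + s - 1)))
      (Ioi 0) := (Real.GammaIntegral_convergent (by linarith : (0:ℝ) < μ + s)).const_mul _
  have hb : ∀ t ∈ Ioi (0:ℝ), t ^ (μ - 1) * Real.exp (-t - x / t) ≤
      s ^ s * x ^ (-s) * (Real.exp (-t) * t ^ (μ + s - 1)) := by
    intro t ht
    have ht : (0:ℝ) < t := ht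
    have h1 : Real.exp (-t - x / t) = Real.exp (-t) * Real.exp (-(x / t)) := by
      rw [← Real.exp_add]; ring_nf
    have h2 : Real.exp (-(x / t)) ≤ s ^ s * (x / t) ^ (-s) :=
      exp_neg_le s (x / t) hs (div_pos hx ht)
    have h3 : (x / t) ^ (-s) = x ^ (-s) * t ^ s := by
      rw [Real.rpow_neg (by positivity), Real.div_rpow hx.le ht.le, Real.rpow_neg hx.le,
        inv_div, div_eq_mul_inv, mul_comm]
    have h4 : t ^ (μ - 1) * t ^ s = t ^ (μ + s - 1) := by
      rw [← Real.rpow_add ht]; ring_nf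
    calc t ^ (μ - 1) * Real.exp (-t - x / t)
        = t ^ (μ - 1) * Real.exp (-t) * Real.exp (-(x / t)) := by rw [h1]; ring
      _ ≤ t ^ (μ - 1) * Real.exp (-t) * (s ^ s * (x ^ (-s) * t ^ s)) := by
          rw [← h3]
          exact mul_le_mul_of_nonneg_left h2 (by positivity)
      _ = s ^ s * x ^ (-s) * (Real.exp (-t) * (t ^ (μ - 1) * t ^ s)) := by ring
      _ = _ := by rw [h4]
  have := setIntegral_mono_on hint hmaj measurableSet_Ioi hb
  calc rho μ x ≤ ∫ t in Ioi (0:ℝ), s ^ s * x ^ (-s) * (Real.exp (-t) * t ^ (μ + s - 1)) := this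
    _ = rhoC μ s * x ^ (-s) := by
        rw [MeasureTheory.integral_const_mul, rhoC]; ring


lemma integrand_aesm (a x : ℝ) :
    AEStronglyMeasurable (fun t : ℝ => t ^ a * Real.exp (-t - x / t))
      (volume.restrict (Ioi 0)) := by
  apply ContinuousOn.aestronglyMeasurable ?_ measurableSet_Ioi
  intro t ht
  exact ((continuousOn_id.rpow_const (fun t ht => Or.inl (ne_of_gt ht)) t ht).mul
    (((continuousOn_id.neg).sub (continuousOn_const.div continuousOn_id
      (fun t ht => ne_of_gt ht))).rexp t ht))

lemma rho_hasDerivAt (μ x : ℝ) (hμ : -1 < μ) (hx : 0 < x) :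
    HasDerivAt (rho μ) (-(rho (μ - 1) x)) x := by
  have key := hasDerivAt_integral_of_dominated_loc_of_deriv_le
    (F := fun y t => t ^ (μ - 1) * Real.exp (-t - y / t))
    (F' := fun y t => -(t ^ (μ - 1 - 1) * Real.exp (-t - y / t)))
    (x₀ := x) (bound := fun t => t ^ (μ - 1 - 1) * Real.exp (-t - (x/2) / t))
    (μ := volume.restrict (Ioi 0)) (s := Metric.ball x (x/2)) (Metric.ball_mem_nhds x (by positivity))
    ?_ ?_ ?_ ?_ ?_ ?_
  · have h2 := key.2
    have : ∫ t in Ioi (0:ℝ), -(t ^ (μ - 1 - 1) * Real.exp (-t - x / t)) =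
        -(rho (μ - 1) x) := by
      rw [integral_neg, rho]
    rw [this] at h2
    exact h2
  · filter_upwards with y using integrand_aesm (μ-1) y
  · exact integrand_integrable hx (by linarith)
  · exact (integrand_aesm (μ-1-1) x).neg
  · filter_upwards [ae_restrict_mem measurableSet_Ioi] with t ht
    intro y hy
    have ht : (0:ℝ) < t := ht
    have hy2 : x/2 < y := by
      have := abs_lt.mp (mem_ball_iff_norm.mp hy)
      linarith [this.1]
    have hnn : (0:ℝ) ≤ t ^ (μ - 1 - 1) * Real.exp (-t - y / t) := by positivity
    rw [norm_neg, Real.norm_of_nonneg hnn]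
    apply mul_le_mul_of_nonneg_left _ (Real.rpow_nonneg ht.le _)
    apply Real.exp_le_exp.mpr
    have : x / 2 / t ≤ y / t := by gcongr
    linarith
  · exact integrand_integrable (by positivity) (by linarith)
  · filter_upwards [ae_restrict_mem measurableSet_Ioi] with t ht
    intro y hy
    have ht : (0:ℝ) < t := ht
    have h1 : HasDerivAt (fun y : ℝ => -t - y / t) (-(1/t)) y := by
      simpa using ((hasDerivAt_id y).div_const t).const_sub (-t)
    have h2 := (h1.exp).const_mul (t ^ (μ - 1))
    refine h2.congr_deriv ?_
    symm
    rw [show μ - 1 - 1 = (μ - 1) + (-1) by ring, Real.rpow_add ht, Real.rpow_neg_one]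
    field_simp

lemma rho_continuousOn (μ : ℝ) (hμ : 0 ≤ μ) : ContinuousOn (rho μ) (Ioi 0) :=
  fun x hx => ((rho_hasDerivAt μ x (by linarith) hx).continuousAt).continuousWithinAt

lemma weight_aesm (μ b : ℝ) (hμ : 0 ≤ μ) :
    AEStronglyMeasurable (fun x : ℝ => x ^ b * rho μ x) (volume.restrict (Ioi 0)) := by
  apply ContinuousOn.aestronglyMeasurable ?_ measurableSet_Ioi
  exact (continuousOn_id.rpow_const (fun t ht => Or.inl (ne_of_gt ht))).mul
    (rho_continuousOn μ hμ)

lemma weight_integrable (μ b : ℝ) (hμ : 0 ≤ μ) (hb : -1 < b) :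
    IntegrableOn (fun x : ℝ => x ^ b * rho μ x) (Ioi 0) := by
  have hsplit : Ioc (0:ℝ) 1 ∪ Ioi 1 = Ioi 0 := Ioc_union_Ioi_eq_Ioi zero_le_one
  rw [← hsplit]
  apply IntegrableOn.union
  · -- near 0
    set s := (b+1)/2 with hs
    have hs0 : 0 < s := by rw [hs]; linarith
    have hmaj : IntegrableOn (fun x : ℝ => rhoC μ s * x ^ (b - s)) (Ioc 0 1) := by
      apply Integrable.const_mul
      exact (intervalIntegrable_iff_integrableOn_Ioc_of_le zero_le_one).mp
        (intervalIntegral.intervalIntegrable_rpow' (by rw [hs]; linarith))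
    refine Integrable.mono' hmaj ((weight_aesm μ b hμ).mono_set Ioc_subset_Ioi_self) ?_
    filter_upwards [ae_restrict_mem measurableSet_Ioc] with x hx
    have hx0 : (0:ℝ) < x := hx.1
    have hnn : 0 ≤ x ^ b * rho μ x := mul_nonneg (by positivity) (rho_nonneg μ x)
    rw [Real.norm_of_nonneg hnn]
    calc x ^ b * rho μ x ≤ x ^ b * (rhoC μ s * x ^ (-s)) :=
          mul_le_mul_of_nonneg_left (rho_le μ s x hμ hs0 hx0) (by positivity)
      _ = rhoC μ s * x ^ (b - s) := by
          rw [show b - s = b + (-s) by ring, Real.rpow_add hx0]; ring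
  · -- near ∞
    set s := b + 2 with hs
    have hs0 : 0 < s := by rw [hs]; linarith
    have hmaj : IntegrableOn (fun x : ℝ => rhoC μ s * x ^ (-2 : ℝ)) (Ioi 1) := by
      apply Integrable.const_mul
      exact integrableOn_Ioi_rpow_of_lt (by norm_num) one_pos
    refine Integrable.mono' hmaj ((weight_aesm μ b hμ).mono_set (Ioi_subset_Ioi zero_le_one)) ?_
    filter_upwards [ae_restrict_mem measurableSet_Ioi] with x hx
    have hx0 : (0:ℝ) < x := lt_trans one_pos hx
    have hnn : 0 ≤ x ^ b * rho μ x := mul_nonneg (by positivity) (rho_nonneg μ x)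
    rw [Real.norm_of_nonneg hnn]
    calc x ^ b * rho μ x ≤ x ^ b * (rhoC μ s * x ^ (-s)) :=
          mul_le_mul_of_nonneg_left (rho_le μ s x hμ hs0 hx0) (by positivity)
      _ = rhoC μ s * x ^ (-2 : ℝ) := by
          rw [show (-2:ℝ) = b + (-s) by rw [hs]; ring, Real.rpow_add hx0]; ring

lemma poly_weight_integrable (p : Polynomial ℝ) (μ b : ℝ) (hμ : 0 ≤ μ) (hb : -1 < b) :
    IntegrableOn (fun x : ℝ => p.eval x * x ^ b * rho μ x) (Ioi 0) := by
  have hint : IntegrableOn (fun x : ℝ =>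
      ∑ i ∈ Finset.range (p.natDegree + 1), p.coeff i * (x ^ ((i:ℝ) + b) * rho μ x))
      (Ioi 0) := by
    apply integrable_finset_sum
    intro i _
    refine (weight_integrable μ ((i:ℝ) + b) hμ ?_).const_mul _
    have : (0:ℝ) ≤ (i:ℝ) := Nat.cast_nonneg i
    linarith
  apply hint.congr
  filter_upwards [ae_restrict_mem measurableSet_Ioi] with x hx
  have hx0 : (0:ℝ) < x := hx
  rw [Polynomial.eval_eq_sum_range, Finset.sum_mul, Finset.sum_mul]
  apply Finset.sum_congr rfl
  intro i _
  rw [Real.rpow_add hx0, Real.rpow_natCast]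
  ring

lemma weight_tendsto_zero (μ c : ℝ) (hμ : 0 ≤ μ) (hc : 0 < c) :
    Tendsto (fun x : ℝ => x ^ c * rho μ x) (nhdsWithin 0 (Ioi 0)) (𝓝 0) := by
  have hg : Tendsto (fun x : ℝ => rhoC μ (c/2) * x ^ (c/2)) (nhdsWithin 0 (Ioi 0)) (𝓝 0) := by
    have h1 : Tendsto (fun x : ℝ => x ^ (c/2)) (nhdsWithin 0 (Ioi 0)) (𝓝 0) := by
      have := (Real.continuousAt_rpow_const 0 (c/2) (Or.inr (by linarith))).continuousWithinAt
        (s := Ioi 0)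
      simpa [ContinuousWithinAt, Real.zero_rpow (by positivity : c/2 ≠ 0)] using this
    simpa using h1.const_mul (rhoC μ (c/2))
  apply squeeze_zero' ?_ ?_ hg
  · filter_upwards [self_mem_nhdsWithin] with x hx
    have hx0 : (0:ℝ) < x := hx
    exact mul_nonneg (by positivity) (rho_nonneg μ x)
  · filter_upwards [self_mem_nhdsWithin] with x hx
    have hx0 : (0:ℝ) < x := hx
    calc x ^ c * rho μ x ≤ x ^ c * (rhoC μ (c/2) * x ^ (-(c/2))) :=
          mul_le_mul_of_nonneg_left (rho_le μ (c/2) x hμ (by positivity) hx0) (by positivity)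
      _ = rhoC μ (c/2) * x ^ (c/2) := by
          rw [show c/2 = c + (-(c/2)) by ring, Real.rpow_add hx0]; ring_nf

lemma weight_tendsto_zero_atTop (μ c : ℝ) (hμ : 0 ≤ μ) :
    Tendsto (fun x : ℝ => x ^ c * rho μ x) atTop (𝓝 0) := by
  set s : ℝ := max c 0 + 1 with hsdef
  have hs0 : 0 < s := by positivity
  have hcs : c - s < 0 := by
    have : c ≤ max c 0 := le_max_left _ _
    simp only [hsdef]; linarith
  have hg : Tendsto (fun x : ℝ => rhoC μ s * x ^ (c - s)) atTop (𝓝 0) := by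
    have h1 : Tendsto (fun x : ℝ => x ^ (-(s - c))) atTop (𝓝 0) :=
      tendsto_rpow_neg_atTop (by linarith)
    have h2 : Tendsto (fun x : ℝ => x ^ (c - s)) atTop (𝓝 0) := by
      simpa [show -(s - c) = c - s by ring] using h1
    simpa using h2.const_mul (rhoC μ s)
  apply squeeze_zero' ?_ ?_ hg
  · filter_upwards [eventually_gt_atTop 0] with x hx0
    exact mul_nonneg (by positivity) (rho_nonneg μ x)
  · filter_upwards [eventually_gt_atTop 0] with x hx0
    calc x ^ c * rho μ x ≤ x ^ c * (rhoC μ s * x ^ (-s)) :=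
          mul_le_mul_of_nonneg_left (rho_le μ s x hμ hs0 hx0) (by positivity)
      _ = rhoC μ s * x ^ (c - s) := by
          rw [show c - s = c + (-s) by ring, Real.rpow_add hx0]; ring

lemma poly_weight_tendsto_zero (p : Polynomial ℝ) (μ c : ℝ) (hμ : 0 ≤ μ) (hc : 0 < c) :
    Tendsto (fun x : ℝ => p.eval x * (x ^ c * rho μ x)) (nhdsWithin 0 (Ioi 0)) (𝓝 0) := by
  have h1 : Tendsto (fun x : ℝ => p.eval x) (nhdsWithin 0 (Ioi 0)) (𝓝 (p.eval 0)) :=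
    (p.continuousAt).continuousWithinAt
  simpa using h1.mul (weight_tendsto_zero μ c hμ hc)

lemma poly_weight_tendsto_zero_atTop (p : Polynomial ℝ) (μ c : ℝ) (hμ : 0 ≤ μ) :
    Tendsto (fun x : ℝ => p.eval x * (x ^ c * rho μ x)) atTop (𝓝 0) := by
  have hS : Tendsto (fun x : ℝ =>
      ∑ i ∈ Finset.range (p.natDegree + 1), p.coeff i * (x ^ ((i:ℝ) + c) * rho μ x))
      atTop (𝓝 0) := by
    have h2 : Tendsto (fun x : ℝ =>
        ∑ i ∈ Finset.range (p.natDegree + 1), p.coeff i * (x ^ ((i:ℝ) + c) * rho μ x))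
        atTop (𝓝 (∑ i ∈ Finset.range (p.natDegree + 1), (0:ℝ))) := by
      apply tendsto_finset_sum
      intro i _
      simpa using (weight_tendsto_zero_atTop μ ((i:ℝ) + c) hμ).const_mul (p.coeff i)
    simpa using h2
  apply hS.congr'
  filter_upwards [eventually_gt_atTop 0] with x hx0
  rw [Polynomial.eval_eq_sum_range, Finset.sum_mul]
  apply Finset.sum_congr rfl
  intro i _
  rw [Real.rpow_add hx0, Real.rpow_natCast]
  ring

lemma ibp_zero (f f' : ℝ → ℝ) (hd : ∀ x ∈ Ioi (0:ℝ), HasDerivAt f (f' x) x)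
    (hi : IntegrableOn f' (Ioi 0)) (hf0 : f 0 = 0)
    (h0 : Tendsto f (nhdsWithin 0 (Ioi 0)) (𝓝 0))
    (hinf : Tendsto f atTop (𝓝 0)) : ∫ x in Ioi (0:ℝ), f' x = 0 := by
  have hcont : ContinuousWithinAt f (Ici 0) 0 := by
    rw [ContinuousWithinAt, hf0, ← Ioi_insert, nhdsWithin_insert]
    apply tendsto_sup.mpr
    constructor
    · simpa [hf0] using tendsto_pure_nhds f 0
    · exact h0
  rw [integral_Ioi_of_hasDerivAt_of_tendsto hcont hd hi hinf, hf0, sub_zero]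

lemma rho_identity (ν x : ℝ) (hν : 0 ≤ ν) (hx : 0 < x) :
    x * rho (ν - 1) x = rho (ν + 1) x - ν * rho ν x := by
  set E : ℝ → ℝ := fun t => Real.exp (-t - x / t) with hE
  set G : ℝ → ℝ := fun t => if t ≤ 0 then 0 else t ^ ν * E t with hG
  set φ : ℝ → ℝ := fun t => ν * (t ^ (ν - 1) * E t) - t ^ ν * E t + x * (t ^ (ν - 2) * E t)
    with hφ
  have hA : IntegrableOn (fun t : ℝ => ν * (t ^ (ν - 1) * E t)) (Ioi 0) :=
    (integrand_integrable (a := ν - 1) hx (by linarith)).const_mul ν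
  have hB : IntegrableOn (fun t : ℝ => t ^ ν * E t) (Ioi 0) :=
    integrand_integrable (a := ν) hx (by linarith)
  have hC : IntegrableOn (fun t : ℝ => x * (t ^ (ν - 2) * E t)) (Ioi 0) :=
    (integrand_integrable (a := ν - 2) hx (by linarith)).const_mul x
  have hd : ∀ t ∈ Ioi (0:ℝ), HasDerivAt G (φ t) t := by
    intro t ht
    have ht : (0:ℝ) < t := ht
    have h1 : HasDerivAt (fun t : ℝ => t ^ ν) (ν * t ^ (ν - 1)) t :=
      Real.hasDerivAt_rpow_const (Or.inl ht.ne')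
    have h2 : HasDerivAt (fun t : ℝ => -t - x / t) (-1 + x / t ^ 2) t := by
      have ha : HasDerivAt (fun t : ℝ => -t) (-1 : ℝ) t := by
        exact (hasDerivAt_id' t).neg
      have hb : HasDerivAt (fun t : ℝ => x / t) (-(x / t ^ 2)) t := by
        have := ((hasDerivAt_inv ht.ne').const_mul x)
        simpa [div_eq_mul_inv, mul_comm, sq] using this
      exact (ha.sub hb).congr_deriv (by ring)
    have h3 : HasDerivAt E (E t * (-1 + x / t ^ 2)) t := h2.exp
    have h4 := h1.mul h3
    have h5 : HasDerivAt (fun t : ℝ => t ^ ν * E t) (φ t) t := by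
      refine h4.congr_deriv ?_
      symm
      have ht2 : (t:ℝ) ^ 2 ≠ 0 := pow_ne_zero 2 ht.ne'
      have e2 : t ^ ν = t ^ (ν - 2) * t ^ (2:ℕ) := by
        rw [← Real.rpow_natCast t 2, ← Real.rpow_add ht]
        norm_num
      rw [hφ]
      simp only [e2]
      field_simp
      ring
    apply h5.congr_of_eventuallyEq
    filter_upwards [isOpen_Ioi.mem_nhds ht] with u hu
    have : ¬ (u ≤ 0) := not_le.mpr hu
    simp [hG, this]
  have hi : IntegrableOn φ (Ioi 0) := (hA.sub hB).add hC
  have hf0 : G 0 = 0 := by simp [hG]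
  have h0 : Tendsto G (nhdsWithin 0 (Ioi 0)) (𝓝 0) := by
    have hexp : Tendsto (fun t : ℝ => Real.exp (-(x / t))) (nhdsWithin 0 (Ioi 0)) (𝓝 0) := by
      apply Real.tendsto_exp_atBot.comp
      apply Filter.tendsto_neg_atTop_atBot.comp
      have h1 : Tendsto (fun t : ℝ => t⁻¹) (nhdsWithin 0 (Ioi 0)) atTop :=
        tendsto_inv_nhdsGT_zero
      have := h1.const_mul_atTop hx
      exact this.congr fun t => (div_eq_mul_inv x t).symm
    apply squeeze_zero' ?_ ?_ hexp
    · filter_upwards [self_mem_nhdsWithin] with t ht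
      have ht : (0:ℝ) < t := ht
      have : ¬ (t ≤ 0) := not_le.mpr ht
      simp only [hG, this, if_false]
      positivity
    · filter_upwards [Ioc_mem_nhdsGT one_pos] with t ht
      have ht0 : (0:ℝ) < t := ht.1
      have : ¬ (t ≤ 0) := not_le.mpr ht0
      simp only [hG, this, if_false]
      have e1 : t ^ ν ≤ 1 := Real.rpow_le_one ht0.le ht.2 hν
      have e2 : E t ≤ Real.exp (-(x / t)) := by
        apply Real.exp_le_exp.mpr
        have : 0 < x / t := div_pos hx ht0
        linarith
      have e3 : 0 ≤ E t := (Real.exp_pos _).le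
      nlinarith [Real.rpow_nonneg ht0.le ν]
  have hinf : Tendsto G atTop (𝓝 0) := by
    have hgg : Tendsto (fun t : ℝ => t ^ ν * Real.exp (-(1:ℝ) * t)) atTop (𝓝 0) :=
      tendsto_rpow_mul_exp_neg_mul_atTop_nhds_zero ν 1 one_pos
    apply squeeze_zero' ?_ ?_ hgg
    · filter_upwards [eventually_gt_atTop 0] with t ht
      have : ¬ (t ≤ 0) := not_le.mpr ht
      simp only [hG, this, if_false]
      positivity
    · filter_upwards [eventually_gt_atTop 0] with t ht
      have : ¬ (t ≤ 0) := not_le.mpr ht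
      simp only [hG, this, if_false]
      have e2 : E t ≤ Real.exp (-(1:ℝ) * t) := by
        apply Real.exp_le_exp.mpr
        have : 0 < x / t := div_pos hx ht
        linarith
      exact mul_le_mul_of_nonneg_left e2 (Real.rpow_nonneg ht.le ν)
  have key := ibp_zero G φ hd hi hf0 h0 hinf
  have I1 : ∫ t in Ioi (0:ℝ), ν * (t ^ (ν - 1) * E t) = ν * rho ν x := by
    rw [MeasureTheory.integral_const_mul]
    rfl
  have I2 : ∫ t in Ioi (0:ℝ), t ^ ν * E t = rho (ν + 1) x := by
    simp only [rho, hE, show ν + 1 - 1 = ν from by ring]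
  have I3 : ∫ t in Ioi (0:ℝ), x * (t ^ (ν - 2) * E t) = x * rho (ν - 1) x := by
    rw [MeasureTheory.integral_const_mul]
    simp only [rho, hE, show ν - 1 - 1 = ν - 2 from by ring]
  have S : ∫ t in Ioi (0:ℝ), φ t =
      ν * rho ν x - rho (ν + 1) x + x * rho (ν - 1) x := by
    simp only [hφ]
    have hAB : IntegrableOn (fun t : ℝ => ν * (t ^ (ν - 1) * E t) - t ^ ν * E t) (Ioi 0) :=
      hA.sub hB
    rw [MeasureTheory.integral_add hAB hC, MeasureTheory.integral_sub hA hB, I1, I2, I3]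
  rw [key] at S
  linarith

lemma deriv_orth1 (ν α : ℝ) (hν : 0 ≤ ν) (hα : -1 < α) (n : ℕ) (P : Polynomial ℝ)
    (h1 : ∀ k : ℕ, k < n → ∫ x in Ioi (0:ℝ), P.eval x * x ^ ((k:ℝ) + α) * rho ν x = 0)
    (h2 : ∀ k : ℕ, k < n → ∫ x in Ioi (0:ℝ), P.eval x * x ^ ((k:ℝ) + α) * rho (ν + 1) x = 0)
    (k : ℕ) (hk : k < n) :
    ∫ x in Ioi (0:ℝ),
      (Polynomial.derivative P).eval x * x ^ ((k:ℝ) + α + 1) * rho ν x = 0 := by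
  have hk0 : (0:ℝ) ≤ (k:ℝ) := Nat.cast_nonneg k
  have hc : (0:ℝ) < (k:ℝ) + α + 1 := by linarith
  set F : ℝ → ℝ := fun x => P.eval x * (x ^ ((k:ℝ) + α + 1) * rho ν x) with hF
  set φ : ℝ → ℝ := fun x =>
      (Polynomial.derivative P).eval x * x ^ ((k:ℝ) + α + 1) * rho ν x
      + ((k:ℝ) + α + 1 + ν) * (P.eval x * x ^ ((k:ℝ) + α) * rho ν x)
      - P.eval x * x ^ ((k:ℝ) + α) * rho (ν + 1) x with hφ
  have hA : IntegrableOn (fun x : ℝ =>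
      (Polynomial.derivative P).eval x * x ^ ((k:ℝ) + α + 1) * rho ν x) (Ioi 0) :=
    poly_weight_integrable _ ν _ hν (by linarith)
  have hB : IntegrableOn (fun x : ℝ =>
      ((k:ℝ) + α + 1 + ν) * (P.eval x * x ^ ((k:ℝ) + α) * rho ν x)) (Ioi 0) :=
    (poly_weight_integrable P ν _ hν (by linarith)).const_mul _
  have hC : IntegrableOn (fun x : ℝ =>
      P.eval x * x ^ ((k:ℝ) + α) * rho (ν + 1) x) (Ioi 0) :=
    poly_weight_integrable P (ν + 1) _ (by linarith) (by linarith)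
  have hd : ∀ x ∈ Ioi (0:ℝ), HasDerivAt F (φ x) x := by
    intro x hx
    have hx : (0:ℝ) < x := hx
    have hP' : HasDerivAt (fun y : ℝ => P.eval y) ((Polynomial.derivative P).eval x) x :=
      P.hasDerivAt x
    have hpow : HasDerivAt (fun y : ℝ => y ^ ((k:ℝ) + α + 1))
        (((k:ℝ) + α + 1) * x ^ ((k:ℝ) + α + 1 - 1)) x :=
      Real.hasDerivAt_rpow_const (Or.inl hx.ne')
    have hrho : HasDerivAt (rho ν) (-(rho (ν - 1) x)) x :=
      rho_hasDerivAt ν x (by linarith) hx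
    have hmul := hP'.mul (hpow.mul hrho)
    refine hmul.congr_deriv ?_
    symm
    simp only [Pi.mul_apply]
    have hid := rho_identity ν x hν hx
    have e0 : x ^ ((k:ℝ) + α + 1 - 1) = x ^ ((k:ℝ) + α) := by
      norm_num
    have e1 : x ^ ((k:ℝ) + α + 1) = x ^ ((k:ℝ) + α) * x := by
      rw [← Real.rpow_add_one hx.ne' ((k:ℝ) + α)]
    rw [hφ]
    simp only [e0, e1]
    linear_combination (Polynomial.eval x P * x ^ ((k:ℝ) + α)) * hid
  have hi : IntegrableOn φ (Ioi 0) := (hA.add hB).sub hC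
  have hf0 : F 0 = 0 := by
    simp [hF, Real.zero_rpow hc.ne']
  have h0 : Tendsto F (nhdsWithin 0 (Ioi 0)) (𝓝 0) :=
    poly_weight_tendsto_zero P ν _ hν hc
  have hinf : Tendsto F atTop (𝓝 0) :=
    poly_weight_tendsto_zero_atTop P ν _ hν
  have key := ibp_zero F φ hd hi hf0 h0 hinf
  have hAB : IntegrableOn (fun x : ℝ =>
      (Polynomial.derivative P).eval x * x ^ ((k:ℝ) + α + 1) * rho ν x
      + ((k:ℝ) + α + 1 + ν) * (P.eval x * x ^ ((k:ℝ) + α) * rho ν x)) (Ioi 0) := hA.add hB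
  have S : ∫ x in Ioi (0:ℝ), φ x =
      (∫ x in Ioi (0:ℝ), (Polynomial.derivative P).eval x * x ^ ((k:ℝ) + α + 1) * rho ν x)
      + ((k:ℝ) + α + 1 + ν) * (∫ x in Ioi (0:ℝ), P.eval x * x ^ ((k:ℝ) + α) * rho ν x)
      - ∫ x in Ioi (0:ℝ), P.eval x * x ^ ((k:ℝ) + α) * rho (ν + 1) x := by
    simp only [hφ]
    rw [MeasureTheory.integral_sub hAB hC, MeasureTheory.integral_add hA hB,
      MeasureTheory.integral_const_mul]
  rw [key, h1 k hk, h2 k hk] at S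
  linarith

lemma deriv_orth2 (ν α : ℝ) (hν : 0 ≤ ν) (hα : -1 < α) (n : ℕ) (P : Polynomial ℝ)
    (h1 : ∀ k : ℕ, k < n → ∫ x in Ioi (0:ℝ), P.eval x * x ^ ((k:ℝ) + α) * rho ν x = 0)
    (h2 : ∀ k : ℕ, k < n → ∫ x in Ioi (0:ℝ), P.eval x * x ^ ((k:ℝ) + α) * rho (ν + 1) x = 0)
    (k : ℕ) (hk : k + 1 < n) :
    ∫ x in Ioi (0:ℝ),
      (Polynomial.derivative P).eval x * x ^ ((k:ℝ) + α + 1) * rho (ν + 1) x = 0 := by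
  have hk0 : (0:ℝ) ≤ (k:ℝ) := Nat.cast_nonneg k
  have hc : (0:ℝ) < (k:ℝ) + α + 1 := by linarith
  set F : ℝ → ℝ := fun x => P.eval x * (x ^ ((k:ℝ) + α + 1) * rho (ν + 1) x) with hF
  set φ : ℝ → ℝ := fun x =>
      (Polynomial.derivative P).eval x * x ^ ((k:ℝ) + α + 1) * rho (ν + 1) x
      + ((k:ℝ) + α + 1) * (P.eval x * x ^ ((k:ℝ) + α) * rho (ν + 1) x)
      - P.eval x * x ^ ((k:ℝ) + α + 1) * rho ν x with hφ
  have hA : IntegrableOn (fun x : ℝ =>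
      (Polynomial.derivative P).eval x * x ^ ((k:ℝ) + α + 1) * rho (ν + 1) x) (Ioi 0) :=
    poly_weight_integrable _ (ν + 1) _ (by linarith) (by linarith)
  have hB : IntegrableOn (fun x : ℝ =>
      ((k:ℝ) + α + 1) * (P.eval x * x ^ ((k:ℝ) + α) * rho (ν + 1) x)) (Ioi 0) :=
    (poly_weight_integrable P (ν + 1) _ (by linarith) (by linarith)).const_mul _
  have hC : IntegrableOn (fun x : ℝ =>
      P.eval x * x ^ ((k:ℝ) + α + 1) * rho ν x) (Ioi 0) :=
    poly_weight_integrable P ν _ hν (by linarith)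
  have hd : ∀ x ∈ Ioi (0:ℝ), HasDerivAt F (φ x) x := by
    intro x hx
    have hx : (0:ℝ) < x := hx
    have hP' : HasDerivAt (fun y : ℝ => P.eval y) ((Polynomial.derivative P).eval x) x :=
      P.hasDerivAt x
    have hpow : HasDerivAt (fun y : ℝ => y ^ ((k:ℝ) + α + 1))
        (((k:ℝ) + α + 1) * x ^ ((k:ℝ) + α + 1 - 1)) x :=
      Real.hasDerivAt_rpow_const (Or.inl hx.ne')
    have hrho : HasDerivAt (rho (ν + 1)) (-(rho ν x)) x := by
      have := rho_hasDerivAt (ν + 1) x (by linarith) hx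
      rw [show ν + 1 - 1 = ν from by ring] at this
      exact this
    have hmul := hP'.mul (hpow.mul hrho)
    refine hmul.congr_deriv ?_
    symm
    simp only [Pi.mul_apply]
    have e0 : x ^ ((k:ℝ) + α + 1 - 1) = x ^ ((k:ℝ) + α) := by
      norm_num
    rw [hφ]
    simp only [e0]
    ring
  have hi : IntegrableOn φ (Ioi 0) := (hA.add hB).sub hC
  have hf0 : F 0 = 0 := by
    simp [hF, Real.zero_rpow hc.ne']
  have h0 : Tendsto F (nhdsWithin 0 (Ioi 0)) (𝓝 0) :=
    poly_weight_tendsto_zero P (ν + 1) _ (by linarith) hc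
  have hinf : Tendsto F atTop (𝓝 0) :=
    poly_weight_tendsto_zero_atTop P (ν + 1) _ (by linarith)
  have key := ibp_zero F φ hd hi hf0 h0 hinf
  have hAB : IntegrableOn (fun x : ℝ =>
      (Polynomial.derivative P).eval x * x ^ ((k:ℝ) + α + 1) * rho (ν + 1) x
      + ((k:ℝ) + α + 1) * (P.eval x * x ^ ((k:ℝ) + α) * rho (ν + 1) x)) (Ioi 0) := hA.add hB
  have S : ∫ x in Ioi (0:ℝ), φ x =
      (∫ x in Ioi (0:ℝ),
        (Polynomial.derivative P).eval x * x ^ ((k:ℝ) + α + 1) * rho (ν + 1) x)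
      + ((k:ℝ) + α + 1) * (∫ x in Ioi (0:ℝ), P.eval x * x ^ ((k:ℝ) + α) * rho (ν + 1) x)
      - ∫ x in Ioi (0:ℝ), P.eval x * x ^ ((k:ℝ) + α + 1) * rho ν x := by
    simp only [hφ]
    rw [MeasureTheory.integral_sub hAB hC, MeasureTheory.integral_add hA hB,
      MeasureTheory.integral_const_mul]
  have h1' : ∫ x in Ioi (0:ℝ), P.eval x * x ^ ((k:ℝ) + α + 1) * rho ν x = 0 := by
    have := h1 (k + 1) hk
    rw [show ((k + 1 : ℕ) : ℝ) + α = (k:ℝ) + α + 1 from by push_cast; ring] at this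
    exact this
  rw [key, h1' , h2 k (by omega)] at S
  linarith

theorem type2_deriv_nn (ν α : ℝ) (hν : 0 ≤ ν) (hα : -1 < α) (n : ℕ) (hn : 1 ≤ n)
    (P Q : Polynomial ℝ)
    (hP : IsType2MOP ν α n n P) (hQ : IsType2MOP ν (α + 1) n (n - 1) Q)
    (hQuniq : ∀ R : Polynomial ℝ, IsType2MOP ν (α + 1) n (n - 1) R → R = Q) :
    Polynomial.derivative P = Polynomial.C ((2 * n : ℕ) : ℝ) * Q := by
  obtain ⟨hPm, hPdeg, hP1, hP2⟩ := hP
  have hd : P.natDegree = 2 * n := by omega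
  have c2n : ((2 * n : ℕ) : ℝ) ≠ 0 := by
    have h : (0:ℕ) < 2 * n := by omega
    exact_mod_cast Nat.pos_iff_ne_zero.mp h
  have hcoeff : (Polynomial.derivative P).coeff (2 * n - 1) = ((2 * n : ℕ) : ℝ) := by
    rw [Polynomial.coeff_derivative]
    have h1 : 2 * n - 1 + 1 = 2 * n := by omega
    rw [h1]
    have : P.coeff (2 * n) = 1 := by
      rw [← hd]
      exact hPm.coeff_natDegree
    rw [this, one_mul, Nat.cast_sub (by omega : 1 ≤ 2 * n)]
    push_cast
    ring
  have hderdeg : (Polynomial.derivative P).natDegree = 2 * n - 1 := by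
    apply le_antisymm
    · have := Polynomial.natDegree_derivative_le P
      omega
    · apply Polynomial.le_natDegree_of_ne_zero
      rw [hcoeff]
      exact c2n
  have hderlead : (Polynomial.derivative P).leadingCoeff = ((2 * n : ℕ) : ℝ) := by
    rw [Polynomial.leadingCoeff, hderdeg, hcoeff]
  set R : Polynomial ℝ := Polynomial.C (((2 * n : ℕ) : ℝ))⁻¹ * Polynomial.derivative P with hR
  have hRdeg : R.natDegree = n + (n - 1) := by
    rw [hR, Polynomial.natDegree_C_mul (inv_ne_zero c2n), hderdeg]
    omega
  have hRmonic : R.Monic := by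
    unfold Polynomial.Monic
    rw [hR, Polynomial.leadingCoeff_mul, Polynomial.leadingCoeff_C, hderlead]
    exact inv_mul_cancel₀ c2n
  have hRev : ∀ x : ℝ, R.eval x = (((2 * n : ℕ) : ℝ))⁻¹ * (Polynomial.derivative P).eval x := by
    intro x
    rw [hR]
    simp
  have hRorth1 : ∀ k : ℕ, k < n →
      ∫ x in Ioi (0:ℝ), R.eval x * x ^ ((k:ℝ) + (α + 1)) * rho ν x = 0 := by
    intro k hk
    have he : (fun x : ℝ => R.eval x * x ^ ((k:ℝ) + (α + 1)) * rho ν x) =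
        fun x : ℝ => (((2 * n : ℕ) : ℝ))⁻¹ *
          ((Polynomial.derivative P).eval x * x ^ ((k:ℝ) + α + 1) * rho ν x) := by
      funext x
      rw [hRev x, show (k:ℝ) + (α + 1) = (k:ℝ) + α + 1 from by ring]
      ring
    rw [he, MeasureTheory.integral_const_mul, deriv_orth1 ν α hν hα n P hP1 hP2 k hk, mul_zero]
  have hRorth2 : ∀ k : ℕ, k < n - 1 →
      ∫ x in Ioi (0:ℝ), R.eval x * x ^ ((k:ℝ) + (α + 1)) * rho (ν + 1) x = 0 := by
    intro k hk
    have he : (fun x : ℝ => R.eval x * x ^ ((k:ℝ) + (α + 1)) * rho (ν + 1) x) =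
        fun x : ℝ => (((2 * n : ℕ) : ℝ))⁻¹ *
          ((Polynomial.derivative P).eval x * x ^ ((k:ℝ) + α + 1) * rho (ν + 1) x) := by
      funext x
      rw [hRev x, show (k:ℝ) + (α + 1) = (k:ℝ) + α + 1 from by ring]
      ring
    rw [he, MeasureTheory.integral_const_mul,
      deriv_orth2 ν α hν hα n P hP1 hP2 k (by omega), mul_zero]
  have hRmop : IsType2MOP ν (α + 1) n (n - 1) R := ⟨hRmonic, hRdeg, hRorth1, hRorth2⟩
  have hRQ := hQuniq R hRmop
  rw [← hRQ, hR, ← mul_assoc, ← Polynomial.C_mul, mul_inv_cancel₀ c2n, Polynomial.C_1, one_mul]
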